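/- arXiv:2008.00385 — 2 statements merged into one kernel-verified Lean document; each statement's English description precedes it below -/
import Mathlib

section
/- For all x, y in ℝ^n and p ≥ 2, the map T(x) = |x|^{p-2} x satisfies ⟨x - y, |x|^{p-2}x - |y|^{p-2}y⟩ ≥ 2^{2-p} |x - y|^p, i.e., T is (p, 2^{2-p})-strongly monotone. -/
open RealInnerProductSpace

private lemma superadd {a b : ℝ} (q : ℝ) (ha : 0 ≤ a) (hb : 0 ≤ b) (hq : 1 ≤ q) :
    a ^ q + b ^ q ≤ (a + b) ^ q := by
  have h := NNReal.add_rpow_le_rpow_add a.toNNReal b.toNNReal hq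
  rw [← NNReal.coe_le_coe] at h
  push_cast at h
  rwa [Real.coe_toNNReal _ ha, Real.coe_toNNReal _ hb] at h

private lemma sq_rpow_half {a : ℝ} (ha : 0 ≤ a) (p : ℝ) : (a ^ 2) ^ (p / 2) = a ^ p := by
  rw [← Real.rpow_two, ← Real.rpow_mul ha]
  ring_nf

private lemma rpow_sub_two_mul_sq {a : ℝ} (ha : 0 ≤ a) {p : ℝ} (hp : 2 ≤ p) :
    a ^ (p - 2) * a ^ 2 = a ^ p := by
  rcases ha.eq_or_lt with h | h
  · rw [← h, Real.zero_rpow (by positivity : p ≠ 0)]; ring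
  · rw [show p = (p - 2) + 2 by ring, Real.rpow_add h, Real.rpow_two]
    ring_nf

private lemma E1' {p a b : ℝ} (hp : 2 ≤ p) (hb : 0 ≤ b) (hab : b ≤ a) :
    (2 : ℝ) ^ (2 - p) * |a - b| ^ p ≤ (a ^ (p - 1) - b ^ (p - 1)) * (a - b) := by
  have hd : 0 ≤ a - b := sub_nonneg.2 hab
  rw [abs_of_nonneg hd]
  have h1 : (a - b) ^ (p - 1) + b ^ (p - 1) ≤ a ^ (p - 1) := by
    have := superadd (p - 1) hd hb (by linarith)
    rwa [sub_add_cancel] at this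
  have h2 : (2 : ℝ) ^ (2 - p) ≤ 1 :=
    Real.rpow_le_one_of_one_le_of_nonpos one_le_two (by linarith)
  have h3 : (a - b) ^ (p - 1) * (a - b) = (a - b) ^ p := by
    rcases hd.eq_or_lt with h | h
    · rw [← h, Real.zero_rpow (by positivity : p ≠ 0)]; ring
    · rw [← Real.rpow_add_one h.ne' (p - 1)]; ring_nf
  have h4 : 0 ≤ (a - b) ^ p := Real.rpow_nonneg hd p
  calc (2 : ℝ) ^ (2 - p) * (a - b) ^ p ≤ 1 * (a - b) ^ p := by nlinarith
    _ = (a - b) ^ (p - 1) * (a - b) := by rw [one_mul, h3]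
    _ ≤ (a ^ (p - 1) - b ^ (p - 1)) * (a - b) :=
        mul_le_mul_of_nonneg_right (by linarith) hd

private lemma E1 {p a b : ℝ} (hp : 2 ≤ p) (ha : 0 ≤ a) (hb : 0 ≤ b) :
    (2 : ℝ) ^ (2 - p) * |a - b| ^ p ≤ (a ^ (p - 1) - b ^ (p - 1)) * (a - b) := by
  rcases le_total b a with h | h
  · exact E1' hp hb h
  · have := E1' hp ha h
    rw [abs_sub_comm] at this
    nlinarith [this]

private lemma E2 {p a b : ℝ} (hp : 2 ≤ p) (ha : 0 ≤ a) (hb : 0 ≤ b) :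
    (2 : ℝ) ^ (2 - p) * (a + b) ^ p ≤ (a ^ (p - 1) + b ^ (p - 1)) * (a + b) := by
  have hq : (1 : ℝ) ≤ p - 1 := by linarith
  have hconv := (convexOn_rpow hq).2 (Set.mem_Ici.2 ha) (Set.mem_Ici.2 hb)
    (by norm_num : (0:ℝ) ≤ 1/2) (by norm_num : (0:ℝ) ≤ 1/2) (by norm_num)
  simp only [smul_eq_mul] at hconv
  -- hconv : (1/2*a + 1/2*b) ^ (p-1) ≤ 1/2 * a^(p-1) + 1/2 * b^(p-1)
  have hab : 0 ≤ a + b := add_nonneg ha hb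
  have hsplit : (a + b) ^ p = (a + b) ^ (p - 1) * (a + b) := by
    rcases hab.eq_or_lt with h | h
    · rw [← h, Real.zero_rpow (by positivity : p ≠ 0)]; ring
    · rw [← Real.rpow_add_one h.ne' (p - 1)]; ring_nf
  have hhalf : (a + b) ^ (p - 1) = 2 ^ (p - 1) * (1/2*a + 1/2*b) ^ (p - 1) := by
    rw [← Real.mul_rpow (by norm_num) (by linarith)]
    ring_nf
  have h2 : (2:ℝ) ^ (2 - p) * 2 ^ (p - 1) = 2 := by
    rw [← Real.rpow_add two_pos]
    norm_num
  have hpos : (0:ℝ) ≤ 2 ^ (2 - p) := Real.rpow_nonneg (by norm_num) _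
  calc (2 : ℝ) ^ (2 - p) * (a + b) ^ p
      = (2 ^ (2 - p) * 2 ^ (p - 1)) * ((1/2*a + 1/2*b) ^ (p - 1) * (a + b)) := by
        rw [hsplit, hhalf]; ring
    _ = 2 * ((1/2*a + 1/2*b) ^ (p - 1) * (a + b)) := by rw [h2]
    _ ≤ 2 * ((1/2 * a^(p-1) + 1/2 * b^(p-1)) * (a + b)) := by
        have := mul_le_mul_of_nonneg_right hconv hab
        nlinarith [this]
    _ = (a ^ (p - 1) + b ^ (p - 1)) * (a + b) := by ring

private lemma key {p a b t : ℝ} (hp : 2 ≤ p) (ha : 0 ≤ a) (hb : 0 ≤ b)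
    (ht : |t| ≤ a * b) :
    (2 : ℝ) ^ (2 - p) * (a ^ 2 + b ^ 2 - 2 * t) ^ (p / 2) ≤
      a ^ p + b ^ p - (a ^ (p - 2) + b ^ (p - 2)) * t := by
  have h2le1 : (2 : ℝ) ^ (2 - p) ≤ 1 :=
    Real.rpow_le_one_of_one_le_of_nonpos one_le_two (by linarith)
  rcases eq_or_lt_of_le (le_trans (abs_nonneg t) ht) with hab0 | hab0
  · -- a * b = 0, so t = 0
    have ht0 : t = 0 := by
      have := abs_nonneg t; have := ht; rw [← hab0] at this
      exact abs_eq_zero.1 (le_antisymm this (abs_nonneg t))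
    subst ht0
    rcases mul_eq_zero.1 hab0.symm with h | h
    · subst h
      have : ((0:ℝ) ^ 2 + b ^ 2 - 2 * 0) ^ (p / 2) = b ^ p := by
        rw [show (0:ℝ) ^ 2 + b ^ 2 - 2 * 0 = b ^ 2 by ring, sq_rpow_half hb]
      rw [this, Real.zero_rpow (by positivity : p ≠ 0)]
      have := Real.rpow_nonneg hb p
      nlinarith
    · subst h
      have : (a ^ 2 + (0:ℝ) ^ 2 - 2 * 0) ^ (p / 2) = a ^ p := by
        rw [show a ^ 2 + (0:ℝ) ^ 2 - 2 * 0 = a ^ 2 by ring, sq_rpow_half ha]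
      rw [this, Real.zero_rpow (by positivity : p ≠ 0)]
      have := Real.rpow_nonneg ha p
      nlinarith
  · -- 0 < a * b
    have ha' : 0 < a := by nlinarith
    have hb' : 0 < b := by nlinarith
    set l : ℝ := (a * b - t) / (2 * (a * b)) with hl
    set m : ℝ := (a * b + t) / (2 * (a * b)) with hm
    have htlo : -(a*b) ≤ t := neg_le_of_abs_le ht
    have hthi : t ≤ a*b := le_of_abs_le ht
    have hl0 : 0 ≤ l := by apply div_nonneg <;> nlinarith
    have hm0 : 0 ≤ m := by apply div_nonneg <;> nlinarith
    have hab' : a * b ≠ 0 := ne_of_gt hab0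
    have hlm : l + m = 1 := by rw [hl, hm]; field_simp; ring
    have hq : (1 : ℝ) ≤ p / 2 := by linarith
    have hconv := (convexOn_rpow hq).2 (Set.mem_Ici.2 (sq_nonneg (a+b)))
      (Set.mem_Ici.2 (sq_nonneg (a-b))) hl0 hm0 hlm
    simp only [smul_eq_mul] at hconv
    have hcomb : l * (a+b)^2 + m * (a-b)^2 = a^2 + b^2 - 2*t := by
      rw [hl, hm]; field_simp; ring
    rw [hcomb] at hconv
    have hsq1 : ((a+b)^2) ^ (p/2) = (a+b)^p := sq_rpow_half (by positivity) p
    have hsq2 : ((a-b)^2) ^ (p/2) = |a-b|^p := by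
      rw [← sq_abs, sq_rpow_half (abs_nonneg _)]
    rw [hsq1, hsq2] at hconv
    have hpos2 : (0:ℝ) ≤ (2:ℝ) ^ (2 - p) := Real.rpow_nonneg (by norm_num) _
    have step1 : (2 : ℝ) ^ (2 - p) * (a ^ 2 + b ^ 2 - 2 * t) ^ (p / 2) ≤
        l * ((2:ℝ)^(2-p) * (a+b)^p) + m * ((2:ℝ)^(2-p) * |a-b|^p) := by
      have := mul_le_mul_of_nonneg_left hconv hpos2
      nlinarith [this]
    have step2 : l * ((2:ℝ)^(2-p) * (a+b)^p) + m * ((2:ℝ)^(2-p) * |a-b|^p) ≤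
        l * ((a^(p-1) + b^(p-1)) * (a+b)) + m * ((a^(p-1) - b^(p-1)) * (a-b)) :=
      add_le_add (mul_le_mul_of_nonneg_left (E2 hp ha hb) hl0)
        (mul_le_mul_of_nonneg_left (E1 hp ha hb) hm0)
    have haq : a ^ (p-1) = a ^ (p-2) * a := by
      rw [show p - 1 = (p-2) + 1 by ring, Real.rpow_add ha', Real.rpow_one]
    have hbq : b ^ (p-1) = b ^ (p-2) * b := by
      rw [show p - 1 = (p-2) + 1 by ring, Real.rpow_add hb', Real.rpow_one]
    have hap : a ^ p = a ^ (p-2) * a ^ 2 := (rpow_sub_two_mul_sq ha hp).symm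
    have hbp : b ^ p = b ^ (p-2) * b ^ 2 := (rpow_sub_two_mul_sq hb hp).symm
    have step3 : l * ((a^(p-1) + b^(p-1)) * (a+b)) + m * ((a^(p-1) - b^(p-1)) * (a-b)) =
        a ^ p + b ^ p - (a ^ (p - 2) + b ^ (p - 2)) * t := by
      rw [haq, hbq, hap, hbp, hl, hm]
      field_simp
      ring
    linarith [step1, step2, step3.le, step3.ge]

theorem stmt_0 (n : ℕ) (p : ℝ) (hp : 2 ≤ p) (x y : EuclideanSpace ℝ (Fin n)) :
    (2 : ℝ) ^ (2 - p) * ‖x - y‖ ^ p ≤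
      ⟪x - y, (‖x‖ ^ (p - 2)) • x - (‖y‖ ^ (p - 2)) • y⟫ := by
  have hx : 0 ≤ ‖x‖ := norm_nonneg x
  have hy : 0 ≤ ‖y‖ := norm_nonneg y
  have hexp : ⟪x - y, (‖x‖ ^ (p - 2)) • x - (‖y‖ ^ (p - 2)) • y⟫ =
      ‖x‖ ^ (p-2) * ‖x‖ ^ 2 + ‖y‖ ^ (p-2) * ‖y‖ ^ 2
        - (‖x‖ ^ (p-2) + ‖y‖ ^ (p-2)) * ⟪x, y⟫ := by
    rw [inner_sub_left, inner_sub_right, inner_sub_right, real_inner_smul_right,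
      real_inner_smul_right, real_inner_smul_right, real_inner_smul_right,
      real_inner_self_eq_norm_sq, real_inner_self_eq_norm_sq, real_inner_comm y x]
    ring
  have hnorm : ‖x - y‖ ^ p = (‖x‖ ^ 2 + ‖y‖ ^ 2 - 2 * ⟪x, y⟫) ^ (p / 2) := by
    rw [← sq_rpow_half (norm_nonneg (x - y)) p, norm_sub_sq_real]
    ring_nf
  rw [hexp, hnorm, rpow_sub_two_mul_sq hx hp, rpow_sub_two_mul_sq hy hp]
  exact key hp hx hy (abs_real_inner_le_norm x y)
end

section
/- Let H be a real Hilbert space and T : H → H a monotone map (⟨x - y, Tx - Ty⟩ ≥ 0 for all x, y) that is everywhere defined. Then T is locally bounded at every point: for each v ∈ H there exist r > 0 and m > 0 such that ‖Tx‖ ≤ m whenever ‖x - v‖ ≤ r. -/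
open RealInnerProductSpace

theorem stmt_10 {H : Type*} [NormedAddCommGroup H] [InnerProductSpace ℝ H]
    [CompleteSpace H] (T : H → H)
    (hmono : ∀ x y : H, 0 ≤ ⟪x - y, T x - T y⟫) (v : H) :
    ∃ r : ℝ, 0 < r ∧ ∃ m : ℝ, 0 < m ∧ ∀ x : H, ‖x - v‖ ≤ r → ‖T x‖ ≤ m := by
  classical
  -- key monotonicity consequence
  have hkey : ∀ u x : H, ⟪T u, x - u⟫ ≤ ⟪T x, x - u⟫ := by
    intro u x
    have h := hmono x u
    rw [inner_sub_right] at h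
    have h1 : ⟪x - u, T u⟫ = ⟪T u, x - u⟫ := real_inner_comm _ _
    have h2 : ⟪x - u, T x⟫ = ⟪T x, x - u⟫ := real_inner_comm _ _
    linarith
  have hboundgen : ∀ u x : H, dist u v ≤ 1 → ⟪T u, x - u⟫ ≤ ‖T x‖ * (‖x - v‖ + 1) := by
    intro u x hu
    have h1 : ⟪T u, x - u⟫ ≤ ⟪T x, x - u⟫ := hkey u x
    have h2 : ⟪T x, x - u⟫ ≤ ‖T x‖ * ‖x - u‖ := real_inner_le_norm _ _
    have h3 : ‖x - u‖ ≤ ‖x - v‖ + 1 := by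
      have h4 : dist v u ≤ 1 := by rwa [dist_comm] at hu
      calc ‖x - u‖ = dist x u := (dist_eq_norm _ _).symm
        _ ≤ dist x v + dist v u := dist_triangle _ _ _
        _ ≤ ‖x - v‖ + 1 := by rw [dist_eq_norm]; linarith
    have h5 : ‖T x‖ * ‖x - u‖ ≤ ‖T x‖ * (‖x - v‖ + 1) :=
      mul_le_mul_of_nonneg_left h3 (norm_nonneg _)
    linarith
  set E : ℕ → Set H := fun n => {x | ∀ u ∈ Metric.closedBall v 1, ⟪T u, x - u⟫ ≤ (n : ℝ)}
    with hE
  have hclosed : ∀ n, IsClosed (E n) := by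
    intro n
    have : E n = ⋂ u ∈ Metric.closedBall v 1, {x | ⟪T u, x - u⟫ ≤ (n : ℝ)} := by
      ext x; simp [hE, Set.mem_iInter]
    rw [this]
    refine isClosed_biInter fun u hu => isClosed_le ?_ continuous_const
    exact Continuous.inner continuous_const (continuous_id.sub continuous_const)
  have hcover : ⋃ n, E n = Set.univ := by
    ext x
    simp only [Set.mem_iUnion, Set.mem_univ, iff_true]
    obtain ⟨n, hn⟩ := exists_nat_ge (‖T x‖ * (‖x - v‖ + 1))
    refine ⟨n, fun u hu => ?_⟩
    have := hboundgen u x (Metric.mem_closedBall.1 hu)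
    linarith
  obtain ⟨n, hn⟩ := nonempty_interior_of_iUnion_of_closed hclosed hcover
  obtain ⟨x0, hx0⟩ := hn
  obtain ⟨ε, hε, hball⟩ := Metric.isOpen_iff.1 isOpen_interior x0 hx0
  have hball' : Metric.ball x0 ε ⊆ E n := hball.trans interior_subset
  -- reflected point
  set q : H := v + (v - x0) with hq
  set C : ℝ := ‖T q‖ * (‖q - v‖ + 1) with hC
  set c : ℝ := (C + n) / 2 with hc
  -- key uniform bound near v
  have hmain : ∀ u ∈ Metric.closedBall v 1, ∀ x : H, ‖x - v‖ ≤ ε / 4 → ⟪T u, x - u⟫ ≤ c := by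
    intro u hu x hx
    set b : H := x0 + (2 : ℝ) • (x - v) with hb
    have hbmem : b ∈ Metric.ball x0 ε := by
      rw [Metric.mem_ball, dist_eq_norm]
      have : b - x0 = (2 : ℝ) • (x - v) := by rw [hb]; abel
      rw [this, norm_smul]
      simp only [Real.norm_ofNat]
      nlinarith
    have hbE : ⟪T u, b - u⟫ ≤ (n : ℝ) := hball' hbmem u hu
    have hqE : ⟪T u, q - u⟫ ≤ C := hboundgen u q (Metric.mem_closedBall.1 hu)
    have hsum : x - u = ((2 : ℝ)⁻¹ : ℝ) • ((q - u) + (b - u)) := by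
      have h2 : (q - u) + (b - u) = (2 : ℝ) • (x - u) := by
        rw [hq, hb]
        rw [two_smul]
        module
      rw [h2, smul_smul]
      norm_num
    rw [hsum, inner_smul_right, inner_add_right]
    rw [hc]
    linarith
  refine ⟨min 1 (ε / 8), by positivity, (|c| + 1) / (ε / 8), by positivity, ?_⟩
  intro u hu
  by_cases hTu : T u = 0
  · rw [hTu, norm_zero]; positivity
  · have hTn : (0 : ℝ) < ‖T u‖ := norm_pos_iff.2 hTu
    set x : H := u + (ε / 8) • (‖T u‖⁻¹ • T u) with hx
    have hxv : ‖x - v‖ ≤ ε / 4 := by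
      have h1 : x - v = (u - v) + (ε / 8) • (‖T u‖⁻¹ • T u) := by rw [hx]; abel
      have h2 : ‖(ε / 8) • (‖T u‖⁻¹ • T u)‖ = ε / 8 := by
        rw [norm_smul, norm_smul, norm_inv, norm_norm, Real.norm_eq_abs,
          abs_of_pos (by positivity : (0:ℝ) < ε / 8)]
        field_simp
      calc ‖x - v‖ ≤ ‖u - v‖ + ‖(ε / 8) • (‖T u‖⁻¹ • T u)‖ := by
            rw [h1]; exact norm_add_le _ _
        _ ≤ ε / 8 + ε / 8 := by
            have := le_trans hu (min_le_right _ _); linarith [h2.le, h2.ge]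
        _ = ε / 4 := by ring
    have humem : u ∈ Metric.closedBall v 1 := by
      rw [Metric.mem_closedBall, dist_eq_norm]
      exact hu.trans (min_le_left _ _)
    have h := hmain u humem x hxv
    have hinner : ⟪T u, x - u⟫ = (ε / 8) * ‖T u‖ := by
      have : x - u = (ε / 8) • (‖T u‖⁻¹ • T u) := by rw [hx]; abel
      rw [this, inner_smul_right, inner_smul_right, real_inner_self_eq_norm_sq]
      field_simp
    rw [hinner] at h
    have hcle : c ≤ |c| + 1 := by
      have := le_abs_self c; linarith
    rw [le_div_iff₀ (by positivity : (0:ℝ) < ε / 8)]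
    nlinarith
end
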